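/- Let G be a connected finite simple graph of order n and even diameter d ≥ 4 such that every spanning tree of G is a caterpillar of diameter d. Then ξ^c(G) ≥ nd + n + d²/2 − 2d − 1 (which equals ξ^c(V_{n,d}) for the volcano graph V_{n,d}). -/

import Mathlib

namespace EciAux

open SimpleGraph Finset

variable {V : Type*}




lemma length_drop {G : SimpleGraph V} {a b : V} (p : G.Walk a b) (n : ℕ) :
    (p.drop n).length = p.length - n := by
  induction p generalizing n with
  | nil => cases n <;> simp [SimpleGraph.Walk.drop]
  | cons h q ih =>
    cases n with
    | zero => simp [SimpleGraph.Walk.drop]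
    | succ m => simpa [SimpleGraph.Walk.drop] using ih m

lemma dist_getVert_right {G : SimpleGraph V} {a b : V} (p : G.Walk a b) (i : ℕ) :
    G.dist (p.getVert i) b ≤ p.length - i := by
  simpa [length_drop] using SimpleGraph.dist_le (p.drop i)

lemma dist_getVert_left {G : SimpleGraph V} {a b : V} (p : G.Walk a b) {i : ℕ}
    (hi : i ≤ p.length) : G.dist a (p.getVert i) ≤ i := by
  have h := SimpleGraph.dist_le (p.reverse.drop (p.length - i))
  rw [length_drop, SimpleGraph.Walk.length_reverse] at h
  have hg : p.reverse.getVert (p.length - i) = p.getVert i := by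
    rw [SimpleGraph.Walk.getVert_reverse]
    congr 1
    omega
  rw [hg] at h
  rw [SimpleGraph.dist_comm]
  calc G.dist (p.getVert i) a ≤ p.length - (p.length - i) := h
    _ ≤ i := by omega

/-- Adding an edge between two non-reachable vertices of an acyclic graph keeps it acyclic. -/
lemma isAcyclic_sup_edge {K : SimpleGraph V} (hK : K.IsAcyclic) {a b : V}
    (hab : a ≠ b) (hr : ¬ K.Reachable a b) : (K ⊔ SimpleGraph.edge a b).IsAcyclic := by
  intro w c hc
  by_cases he : s(a, b) ∈ c.edges
  · have hcyc : ∃ (u : V) (q : (K ⊔ SimpleGraph.edge a b).Walk u u), q.IsCycle ∧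
        s(a, b) ∈ q.edges := ⟨w, c, hc, he⟩
    have hreach := (SimpleGraph.adj_and_reachable_delete_edges_iff_exists_cycle
      (G := K ⊔ SimpleGraph.edge a b)).2 hcyc
    apply hr
    refine SimpleGraph.Reachable.mono ?_ hreach.2
    intro x y hxy
    rw [SimpleGraph.deleteEdges, SimpleGraph.sdiff_adj] at hxy
    obtain ⟨hxy1, hxy2⟩ := hxy
    rw [SimpleGraph.sup_adj] at hxy1
    rcases hxy1 with h | h
    · exact h
    · exfalso
      rw [SimpleGraph.edge_adj] at h
      apply hxy2
      rw [SimpleGraph.fromEdgeSet_adj]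
      refine ⟨?_, h.2⟩
      rcases h.1 with ⟨rfl, rfl⟩ | ⟨rfl, rfl⟩
      · simp
      · simp [Sym2.eq_swap]
  · have hsub : ∀ e ∈ c.edges, e ∈ K.edgeSet := by
      intro e hee
      have := c.edges_subset_edgeSet hee
      rw [SimpleGraph.edgeSet_sup, SimpleGraph.edge_edgeSet_of_ne hab] at this
      rcases this with h | h
      · exact h
      · exact absurd (h ▸ hee) he
    exact hK (c.transfer K hsub) (hc.transfer hsub)

/-- A connected graph contains a spanning tree extending any acyclic subgraph. -/
lemma exists_tree_between [Finite V] {G H : SimpleGraph V} (hG : G.Connected)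
    (hH : H ≤ G) (hHa : H.IsAcyclic) : ∃ T, H ≤ T ∧ T ≤ G ∧ T.IsTree := by
  classical
  obtain ⟨K, hKS, hmax⟩ := Set.Finite.exists_maximalFor id
    {K : SimpleGraph V | H ≤ K ∧ K ≤ G ∧ K.IsAcyclic} (Set.toFinite _) ⟨H, le_rfl, hH, hHa⟩
  obtain ⟨hHK, hKG, hKa⟩ := hKS
  have key : ∀ {a b : V}, G.Adj a b → K.Reachable a b := by
    intro a b hadj
    by_contra hr
    have hab : a ≠ b := fun hEq => hr (hEq ▸ SimpleGraph.Reachable.refl _)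
    have hK'a := isAcyclic_sup_edge hKa hab hr
    have hedge : SimpleGraph.edge a b ≤ G := by
      intro x y hxy
      rw [SimpleGraph.edge_adj] at hxy
      rcases hxy.1 with ⟨rfl, rfl⟩ | ⟨rfl, rfl⟩
      · exact hadj
      · exact hadj.symm
    have hmem : K ⊔ SimpleGraph.edge a b ∈
        {K : SimpleGraph V | H ≤ K ∧ K ≤ G ∧ K.IsAcyclic} :=
      ⟨hHK.trans le_sup_left, sup_le hKG hedge, hK'a⟩
    have heq : K = K ⊔ SimpleGraph.edge a b := le_antisymm le_sup_left (hmax hmem le_sup_left)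
    apply hr
    have : (K ⊔ SimpleGraph.edge a b).Adj a b := by
      rw [SimpleGraph.sup_adj, SimpleGraph.edge_adj]
      exact Or.inr ⟨Or.inl ⟨rfl, rfl⟩, hab⟩
    rw [← heq] at this
    exact this.reachable
  have hpre : K.Preconnected := by
    intro a b
    have : ∀ {a b : V} (w : G.Walk a b), K.Reachable a b := by
      intro a b w
      induction w with
      | nil => exact SimpleGraph.Reachable.refl _
      | cons h q ih => exact (key h).trans ih
    exact this (hG.preconnected a b).some
  have : Nonempty V := hG.nonempty
  exact ⟨K, hHK, hKG, ⟨SimpleGraph.Connected.mk hpre, hKa⟩⟩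





lemma not_reachable_of_isolated {K : SimpleGraph V} {x w : V} (hxw : x ≠ w)
    (hiso : ∀ z, ¬ K.Adj x z) : ¬ K.Reachable x w := by
  rintro ⟨q⟩
  cases q with
  | nil => exact hxw rfl
  | cons h _ => exact hiso _ h

/-- The graph formed by the edges of a path is acyclic. -/
lemma pathGraph_acyclic {G : SimpleGraph V} {x y : V} (p : G.Walk x y) (hp : p.IsPath) :
    (SimpleGraph.fromEdgeSet {e | e ∈ p.edges}).IsAcyclic := by
  induction p with
  | nil =>
    simp only [SimpleGraph.Walk.edges_nil, List.not_mem_nil, Set.setOf_false,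
      SimpleGraph.fromEdgeSet_empty]
    exact SimpleGraph.isAcyclic_bot
  | @cons a b c h q ih =>
    rw [SimpleGraph.Walk.cons_isPath_iff] at hp
    obtain ⟨hq, hnot⟩ := hp
    have hset : ({e | e ∈ (SimpleGraph.Walk.cons h q).edges} : Set (Sym2 V)) =
        {e | e ∈ q.edges} ∪ {s(a, b)} := by
      ext e
      simp [SimpleGraph.Walk.edges_cons, or_comm]
    rw [hset, SimpleGraph.fromEdgeSet_union]
    have hab : a ≠ b := h.ne
    have hiso : ∀ z, ¬ (SimpleGraph.fromEdgeSet {e | e ∈ q.edges}).Adj a z := by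
      intro z hz
      rw [SimpleGraph.fromEdgeSet_adj] at hz
      exact hnot (q.fst_mem_support_of_mem_edges hz.1)
    have hnr : ¬ (SimpleGraph.fromEdgeSet {e | e ∈ q.edges}).Reachable a b := by
      apply not_reachable_of_isolated hab hiso
    have := isAcyclic_sup_edge (ih hq) hab hnr
    simpa [SimpleGraph.edge] using this

/-- In a tree, the length of any path between two vertices equals the distance. -/
lemma IsTree.length_eq_dist {T : SimpleGraph V} (hT : T.IsTree) {a b : V}
    (p : T.Walk a b) (hp : p.IsPath) : p.length = T.dist a b := by
  obtain ⟨q, hq, hqd⟩ := hT.isConnected.exists_path_of_dist a b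
  have : (⟨p, hp⟩ : T.Path a b) = ⟨q, hq⟩ := hT.IsAcyclic.path_unique _ _
  have hpq : p = q := congrArg Subtype.val this
  rw [hpq, hqd]





/-- Weighted handshake: `∑ v, f v * deg v = ∑ e, (f u + f v)`. -/
lemma sum_mul_degree_eq [Fintype V] [DecidableEq V] (G : SimpleGraph V) [DecidableRel G.Adj]
    (f : V → ℕ) :
    ∑ v, f v * G.degree v =
      ∑ e ∈ G.edgeFinset, Sym2.lift ⟨fun a b => f a + f b, fun _ _ => Nat.add_comm _ _⟩ e := by
  have h1 : ∑ d : G.Dart, f d.fst = ∑ v, f v * G.degree v := by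
    rw [← Finset.sum_fiberwise_of_maps_to (g := fun d : G.Dart => d.fst)
      (t := Finset.univ) (fun d _ => Finset.mem_univ _) (fun d : G.Dart => f d.fst)]
    refine Finset.sum_congr rfl fun v _ => ?_
    have : ∀ d ∈ Finset.univ.filter (fun d : G.Dart => d.fst = v), f d.fst = f v := by
      intro d hd
      rw [Finset.mem_filter] at hd
      rw [hd.2]
    rw [Finset.sum_congr rfl this, Finset.sum_const, G.dart_fst_fiber_card_eq_degree v,
      smul_eq_mul, mul_comm]
  have h2 : ∑ d : G.Dart, f d.fst =
      ∑ e ∈ G.edgeFinset, Sym2.lift ⟨fun a b => f a + f b, fun _ _ => Nat.add_comm _ _⟩ e := by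
    rw [← Finset.sum_fiberwise_of_maps_to (g := fun d : G.Dart => d.edge)
      (t := G.edgeFinset) (fun d _ => by simp [SimpleGraph.Dart.edge_mem])
      (fun d : G.Dart => f d.fst)]
    refine Finset.sum_congr rfl fun e he => ?_
    rw [SimpleGraph.mem_edgeFinset] at he
    induction e with
    | h a b =>
      have hadj : G.Adj a b := he
      set d0 : G.Dart := ⟨(a, b), hadj⟩ with hd0
      have hfib : Finset.univ.filter (fun d : G.Dart => d.edge = s(a, b)) = {d0, d0.symm} := by
        exact SimpleGraph.Dart.edge_fiber d0
      rw [hfib, Finset.sum_pair (by exact fun hEq => (SimpleGraph.Dart.symm_ne d0 hEq.symm).elim)]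
      simp [d0, SimpleGraph.Dart.symm]
  rw [← h1, h2]

/-- `∑_{i<2k} min i (2k-i) = k^2`. -/
lemma sum_min_eq (k : ℕ) : ∑ i ∈ Finset.range (2 * k), min i (2 * k - i) = k ^ 2 := by
  induction k with
  | zero => simp
  | succ k ih =>
    have h1 : 2 * (k + 1) = (2 * k + 1) + 1 := by ring
    rw [h1, Finset.sum_range_succ', ]
    have h2 : ∀ i ∈ Finset.range (2 * k + 1), min (i + 1) (2 * k + 1 + 1 - (i + 1)) =
        min i (2 * k - i) + 1 := by
      intro i hi
      rw [Finset.mem_range] at hi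
      have : 2 * k + 1 + 1 - (i + 1) = (2 * k - i) + 1 := by omega
      rw [this]
      omega
    rw [Finset.sum_congr rfl h2, Finset.sum_add_distrib, Finset.sum_range_succ, ih,
      Finset.sum_const, Finset.card_range]
    have h3 : min (2 * k) (2 * k - 2 * k) = 0 := by omega
    rw [h3]
    have h4 : (0 : ℕ) ⊓ (2 * k + 1 + 1 - 0) = 0 := by omega
    rw [h4, smul_eq_mul]
    ring



lemma sum_max_path (k : ℕ) :
    ∑ i ∈ Finset.range (2 * k), (max i (2 * k - i) + max (i + 1) (2 * k - (i + 1))) =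
      6 * k ^ 2 := by
  have hgs : ∑ i ∈ Finset.range (2 * k), min (i + 1) (2 * k - (i + 1)) = k ^ 2 := by
    have hA : ∑ i ∈ Finset.range (2 * k + 1), min i (2 * k - i) = k ^ 2 := by
      rw [Finset.sum_range_succ, sum_min_eq]
      have : min (2 * k) (2 * k - 2 * k) = 0 := by omega
      rw [this]
      ring
    have hB := Finset.sum_range_succ' (fun i => min i (2 * k - i)) (2 * k)
    rw [hA] at hB
    have h0 : min 0 (2 * k - 0) = 0 := by omega
    rw [h0] at hB
    omega
  have hsum : (∑ i ∈ Finset.range (2 * k), (max i (2 * k - i) + max (i + 1) (2 * k - (i + 1))))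
      + (∑ i ∈ Finset.range (2 * k), (min i (2 * k - i) + min (i + 1) (2 * k - (i + 1)))) =
      8 * k ^ 2 := by
    rw [← Finset.sum_add_distrib]
    have hterm : ∀ i ∈ Finset.range (2 * k),
        (max i (2 * k - i) + max (i + 1) (2 * k - (i + 1)))
          + (min i (2 * k - i) + min (i + 1) (2 * k - (i + 1))) = 4 * k := by
      intro i hi
      rw [Finset.mem_range] at hi
      omega
    rw [Finset.sum_congr rfl hterm, Finset.sum_const, Finset.card_range, smul_eq_mul]
    ring
  have h2 : ∑ i ∈ Finset.range (2 * k), (min i (2 * k - i) + min (i + 1) (2 * k - (i + 1)))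
      = 2 * k ^ 2 := by
    rw [Finset.sum_add_distrib, sum_min_eq, hgs]
    ring
  generalize hK : k ^ 2 = K at hsum h2 ⊢
  omega


end EciAux

/-- The eccentricity of a vertex `v` in a finite graph `G`:
the maximum distance from `v` to any vertex of `G`. -/
noncomputable def SimpleGraph.ecc {V : Type*} [Fintype V] (G : SimpleGraph V) (v : V) : ℕ :=
  Finset.univ.sup fun u => G.dist v u

/-- The eccentric connectivity index of a finite graph `G`:
`ξ^c(G) = ∑_{v ∈ V(G)} ε(v) · d(v)`. -/
noncomputable def SimpleGraph.eci {V : Type*} [Fintype V] (G : SimpleGraph V) : ℕ :=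
  ∑ v, G.ecc v * Nat.card (G.neighborSet v)


/-- A caterpillar is a tree in which all vertices are within distance one of a
central path. -/
def SimpleGraph.IsCaterpillar {V : Type*} (T : SimpleGraph V) : Prop :=
  T.IsTree ∧ ∃ (k : ℕ) (p : Fin (k + 1) → V), Function.Injective p ∧
    (∀ i : Fin k, T.Adj (p i.castSucc) (p i.succ)) ∧
    ∀ u : V, ∃ i : Fin (k + 1), T.dist u (p i) ≤ 1

/-- Let `G` be a connected graph of order `n` and even diameter `d ≥ 4` such
that every spanning tree of `G` is a caterpillar of diameter `d`.  Then
`ξ^c(G) ≥ nd + n + d²/2 − 2d − 1` (which equals `ξ^c(V_{n,d})`). -/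
theorem eci_lower_bound_caterpillar_even {V : Type*} [Fintype V]
    (G : SimpleGraph V) (hG : G.Connected) (n d : ℕ)
    (hn : Fintype.card V = n) (hdiam : G.diam = d) (hde : Even d) (hd4 : 4 ≤ d)
    (hspan : ∀ T : SimpleGraph V, T ≤ G → T.IsTree →
      T.IsCaterpillar ∧ T.diam = d) :
    (G.eci : ℚ) ≥ n * d + n + d ^ 2 / 2 - 2 * d - 1 := by
  classical
  obtain ⟨k, hkk⟩ := hde
  have hk2 : d = 2 * k := by omega
  have hne : Nonempty V := hG.nonempty
  have hd0 : G.diam ≠ 0 := by omega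
  have hged : G.ediam ≠ ⊤ := SimpleGraph.ediam_ne_top_of_diam_ne_zero hd0
  obtain ⟨x, y, hxy⟩ := G.exists_dist_eq_diam
  rw [hdiam] at hxy
  obtain ⟨p, hppath, hplen⟩ := hG.exists_path_of_dist x y
  rw [hxy] at hplen
  set u : ℕ → V := p.getVert with hu
  have htri : ∀ v, d ≤ G.dist x v + G.dist v y := by
    intro v
    have h := hG.dist_triangle (u := x) (v := v) (w := y)
    omega
  have hax : ∀ i, i ≤ d → G.dist x (u i) = i := by
    intro i hi
    have h1 : G.dist x (u i) ≤ i := EciAux.dist_getVert_left p (by omega)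
    have h2 : G.dist (u i) y ≤ d - i := by
      have := EciAux.dist_getVert_right p i
      rwa [hplen] at this
    have := htri (u i)
    omega
  have hay : ∀ i, i ≤ d → G.dist (u i) y = d - i := by
    intro i hi
    have h1 : G.dist x (u i) ≤ i := EciAux.dist_getVert_left p (by omega)
    have h2 : G.dist (u i) y ≤ d - i := by
      have := EciAux.dist_getVert_right p i
      rwa [hplen] at this
    have := htri (u i)
    omega
  have eccd : ∀ v w : V, G.dist v w ≤ G.ecc v := by
    intro v w
    exact Finset.le_sup (f := fun w => G.dist v w) (Finset.mem_univ w)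
  have hecc1 : ∀ v : V, k ≤ G.ecc v := by
    intro v
    have h := htri v
    have e1 : G.dist v x ≤ G.ecc v := eccd v x
    have e2 : G.dist v y ≤ G.ecc v := eccd v y
    rw [SimpleGraph.dist_comm] at e1
    omega
  have hecc2 : ∀ v : V, ¬ (G.dist x v = k ∧ G.dist v y = k) → k + 1 ≤ G.ecc v := by
    intro v hv
    have h := htri v
    have e1 : G.dist v x ≤ G.ecc v := eccd v x
    have e2 : G.dist v y ≤ G.ecc v := eccd v y
    rw [SimpleGraph.dist_comm] at e1
    omega
  -- no two adjacent central vertices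
  have hcent : ∀ a b : V, G.Adj a b → G.dist x a = k → G.dist a y = k →
      G.dist x b = k → G.dist b y = k → False := by
    intro a b hadj ha1 ha2 hb1 hb2
    obtain ⟨q1, hq1p, hq1l⟩ := hG.exists_path_of_dist x a
    obtain ⟨q2, hq2p, hq2l⟩ := hG.exists_path_of_dist b y
    rw [ha1] at hq1l
    rw [hb2] at hq2l
    have hdisj : ∀ z, z ∈ q1.support → z ∈ q2.support → False := by
      intro z hz1 hz2
      obtain ⟨r1, r2, hr⟩ := SimpleGraph.Walk.mem_support_iff_exists_append.mp hz1
      obtain ⟨s1, s2, hs⟩ := SimpleGraph.Walk.mem_support_iff_exists_append.mp hz2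
      have l1 : G.dist x z ≤ r1.length := SimpleGraph.dist_le r1
      have l2 : G.dist z a ≤ r2.length := SimpleGraph.dist_le r2
      have l12 : r1.length + r2.length = k := by
        rw [hr, SimpleGraph.Walk.length_append] at hq1l
        exact hq1l
      have m1 : G.dist b z ≤ s1.length := SimpleGraph.dist_le s1
      have m2 : G.dist z y ≤ s2.length := SimpleGraph.dist_le s2
      have m12 : s1.length + s2.length = k := by
        rw [hs, SimpleGraph.Walk.length_append] at hq2l
        exact hq2l
      have t := htri z
      have hr2 : r2.length = 0 := by omega
      have hs1 : s1.length = 0 := by omega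
      have hza : z = a := SimpleGraph.Walk.eq_of_length_eq_zero hr2
      have hbz : b = z := SimpleGraph.Walk.eq_of_length_eq_zero hs1
      subst hza
      exact hadj.ne hbz.symm
    set W : G.Walk x y := q1.append (SimpleGraph.Walk.cons hadj q2) with hW
    have hWlen : W.length = d + 1 := by
      rw [hW, SimpleGraph.Walk.length_append, SimpleGraph.Walk.length_cons, hq1l, hq2l]
      omega
    have htail : (SimpleGraph.Walk.cons hadj q2).support.tail = q2.support := by
      rw [SimpleGraph.Walk.support_cons]
      rfl
    have hWpath : W.IsPath := by
      rw [SimpleGraph.Walk.isPath_def, hW, SimpleGraph.Walk.support_append, htail]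
      refine List.Nodup.append hq1p.support_nodup hq2p.support_nodup ?_
      intro z hz1 hz2
      exact hdisj z hz1 hz2
    have hHle : SimpleGraph.fromEdgeSet {e | e ∈ W.edges} ≤ G := by
      intro a' b' hab'
      rw [SimpleGraph.fromEdgeSet_adj] at hab'
      exact W.adj_of_mem_edges hab'.1
    obtain ⟨T, hHT, hTG, hTtree⟩ :=
      EciAux.exists_tree_between hG hHle (EciAux.pathGraph_acyclic W hWpath)
    have hWT : ∀ e ∈ W.edges, e ∈ T.edgeSet := by
      intro e hee
      apply SimpleGraph.edgeSet_mono hHT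
      rw [SimpleGraph.edgeSet_fromEdgeSet]
      exact ⟨hee, G.not_isDiag_of_mem_edgeSet (W.edges_subset_edgeSet hee)⟩
    have hW'p : (W.transfer T hWT).IsPath := hWpath.transfer hWT
    have hdT : T.dist x y = d + 1 := by
      rw [← EciAux.IsTree.length_eq_dist hTtree (W.transfer T hWT) hW'p,
        SimpleGraph.Walk.length_transfer, hWlen]
    obtain ⟨hcat, hTd⟩ := hspan T hTG hTtree
    have hTdle : T.dist x y ≤ T.diam :=
      T.dist_le_diam (SimpleGraph.ediam_ne_top_of_diam_ne_zero (by rw [hTd]; omega))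
    rw [hdT, hTd] at hTdle
    omega
  -- rewrite eci via degrees
  have heci : G.eci = ∑ v, G.ecc v * G.degree v := by
    unfold SimpleGraph.eci
    refine Finset.sum_congr rfl fun v _ => ?_
    rw [Nat.card_eq_fintype_card, SimpleGraph.card_neighborSet_eq_degree]
  have hsum := EciAux.sum_mul_degree_eq G G.ecc
  set F : Sym2 V → ℕ :=
    fun e => Sym2.lift ⟨fun a b => G.ecc a + G.ecc b, fun _ _ => Nat.add_comm _ _⟩ e with hF
  have huinj : ∀ i j, i ≤ d → j ≤ d → u i = u j → i = j := by
    intro i j hi hj he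
    have h1 := hax i hi
    have h2 := hax j hj
    rw [he] at h1
    omega
  set P : Finset (Sym2 V) := (Finset.range d).image (fun i => s(u i, u (i + 1))) with hP
  have hinjP : Set.InjOn (fun i => s(u i, u (i + 1))) (Finset.range d) := by
    intro i hi j hj he
    rw [Finset.coe_range, Set.mem_Iio] at hi hj
    rw [Sym2.eq_iff] at he
    rcases he with ⟨h1, h2⟩ | ⟨h1, h2⟩
    · exact huinj i j (by omega) (by omega) h1
    · have := huinj i (j + 1) (by omega) (by omega) h1
      have := huinj (i + 1) j (by omega) (by omega) h2
      omega
  have hPsub : P ⊆ G.edgeFinset := by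
    intro e he
    rw [hP, Finset.mem_image] at he
    obtain ⟨i, hi, rfl⟩ := he
    rw [Finset.mem_range] at hi
    rw [SimpleGraph.mem_edgeFinset, SimpleGraph.mem_edgeSet]
    exact p.adj_getVert_succ (by omega)
  have hPcard : P.card = d := by
    rw [hP, Finset.card_image_of_injOn hinjP, Finset.card_range]
  have hpath_sum : 6 * k ^ 2 ≤ ∑ e ∈ P, F e := by
    have hPsum : ∑ e ∈ P, F e = ∑ i ∈ Finset.range d, (G.ecc (u i) + G.ecc (u (i + 1))) := by
      rw [hP, Finset.sum_image hinjP]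
      refine Finset.sum_congr rfl fun i _ => ?_
      simp [hF]
    have hterm : ∀ i ∈ Finset.range d,
        max i (d - i) + max (i + 1) (d - (i + 1)) ≤ G.ecc (u i) + G.ecc (u (i + 1)) := by
      intro i hi
      rw [Finset.mem_range] at hi
      have e1 : G.dist (u i) x ≤ G.ecc (u i) := eccd _ x
      have e2 : G.dist (u i) y ≤ G.ecc (u i) := eccd _ y
      have e3 : G.dist (u (i + 1)) x ≤ G.ecc (u (i + 1)) := eccd _ x
      have e4 : G.dist (u (i + 1)) y ≤ G.ecc (u (i + 1)) := eccd _ y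
      rw [SimpleGraph.dist_comm] at e1 e3
      have a1 := hax i (by omega)
      have a2 := hay i (by omega)
      have a3 := hax (i + 1) (by omega)
      have a4 := hay (i + 1) (by omega)
      omega
    calc 6 * k ^ 2
        = ∑ i ∈ Finset.range (2 * k), (max i (2 * k - i) + max (i + 1) (2 * k - (i + 1))) :=
          (EciAux.sum_max_path k).symm
      _ = ∑ i ∈ Finset.range d, (max i (d - i) + max (i + 1) (d - (i + 1))) := by rw [← hk2]
      _ ≤ ∑ i ∈ Finset.range d, (G.ecc (u i) + G.ecc (u (i + 1))) := Finset.sum_le_sum hterm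
      _ = ∑ e ∈ P, F e := hPsum.symm
  have hoff : ∀ e ∈ G.edgeFinset, d + 1 ≤ F e := by
    intro e he
    rw [SimpleGraph.mem_edgeFinset] at he
    induction e with
    | h a b =>
      have hadj : G.Adj a b := he
      have h1 := hecc1 a
      have h2 := hecc1 b
      have hFe : F s(a, b) = G.ecc a + G.ecc b := by simp [hF]
      rw [hFe]
      by_cases hca : G.dist x a = k ∧ G.dist a y = k
      · by_cases hcb : G.dist x b = k ∧ G.dist b y = k
        · exact (hcent a b hadj hca.1 hca.2 hcb.1 hcb.2).elim
        · have := hecc2 b hcb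
          omega
      · have := hecc2 a hca
        omega
  have hm : Fintype.card V - 1 ≤ G.edgeFinset.card := by
    obtain ⟨T0, _, hT0G, hT0t⟩ := EciAux.exists_tree_between hG bot_le SimpleGraph.isAcyclic_bot
    have hc := hT0t.card_edgeFinset
    have hle := Finset.card_le_card (SimpleGraph.edgeFinset_mono hT0G)
    omega
  have hnd : d + 1 ≤ n := by
    rw [← hn]
    have hinj : Function.Injective (fun i : Fin (d + 1) => u i) := by
      intro i j he
      exact Fin.ext (huinj i j (by omega) (by omega) he)
    simpa using Fintype.card_le_of_injective _ hinj
  have hmain : 6 * k ^ 2 + (n - 1 - d) * (d + 1) ≤ G.eci := by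
    rw [heci, hsum, ← Finset.sum_sdiff hPsub]
    have hle2 : (n - 1 - d) * (d + 1) ≤ ∑ e ∈ G.edgeFinset \ P, F e := by
      have hcard : n - 1 - d ≤ (G.edgeFinset \ P).card := by
        rw [Finset.card_sdiff_of_subset hPsub, hPcard]
        rw [hn] at hm
        omega
      calc (n - 1 - d) * (d + 1)
          ≤ (G.edgeFinset \ P).card * (d + 1) := Nat.mul_le_mul_right _ hcard
        _ ≤ ∑ e ∈ G.edgeFinset \ P, F e := by
            have := Finset.card_nsmul_le_sum (G.edgeFinset \ P) F (d + 1)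
              (fun e he' => hoff e (Finset.mem_sdiff.mp he').1)
            simpa [smul_eq_mul] using this
    calc 6 * k ^ 2 + (n - 1 - d) * (d + 1)
        = (n - 1 - d) * (d + 1) + 6 * k ^ 2 := by ring
      _ ≤ (∑ e ∈ G.edgeFinset \ P, F e) + ∑ e ∈ P, F e := Nat.add_le_add hle2 hpath_sum
  -- final arithmetic over ℚ
  rw [ge_iff_le]
  have hcast : ((6 * k ^ 2 + (n - 1 - d) * (d + 1) : ℕ) : ℚ) ≤ (G.eci : ℚ) :=
    Nat.cast_le.mpr hmain
  refine le_trans ?_ hcast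
  have hsub : ((n - 1 - d : ℕ) : ℚ) = (n : ℚ) - 1 - d := by
    have : n - 1 - d = n - (d + 1) := by omega
    rw [this, Nat.cast_sub hnd]
    push_cast
    ring
  push_cast [hsub]
  rw [hk2]
  push_cast
  ring_nf
  nlinarith [sq_nonneg ((k : ℚ)), sq_nonneg ((n : ℚ))]
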